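/- For all integers s, t ≥ 0 and k > 1 with s + t ≤ k − 1, one has τ^A_{s,t}(k) = η_{s,t}(k−1): deleting the empty first column of a type-(A) multiline queue with disjoint rows gives a weight-preserving bijection with the linked multiline queues counted by η_{s,t}(k−1). -/

import Mathlib

open scoped Classical

noncomputable section

/-- `[r]_q = 1 + q + ... + q^(r-1)`, with `[0]_q = 0`. -/
def qa (q : ℝ) (r : ℕ) : ℝ := ∑ m ∈ Finset.range r, q ^ m

/-- The factor contributed by an element `a` of the first row that is linked to `b`
when the set of available elements of the second row is `D`: if `b` is the `m`-th
element of `D` in increasing order of cyclic distance `(· - a) mod k`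
(the ring `Z_k` being identified with `{1, …, k}`) and `r = |D|`, the factor is
`q^(m-1) / [r]_q`. -/
def stepW (q : ℝ) (k a : ℕ) (D : Finset ℕ) (b : ℕ) : ℝ :=
  q ^ ((D.filter fun c => (c + k - a) % k < (b + k - a) % k).card) / qa q D.card

/-- Product of the factors obtained by processing the elements of the first list
in order, starting with available set `D`; each processed `a` is linked to `F a`,
which then becomes unavailable. -/
def chainW (q : ℝ) (k : ℕ) (F : ℕ → ℕ) : List ℕ → Finset ℕ → ℝ
  | [], _ => 1
  | a :: l, D => stepW q k a D (F a) * chainW q k F l (D.erase (F a))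

/-- The weight `wt(A, B, F)` of a linked two-row multiline queue on `Z_k = {1,…,k}`:
trivial links (elements of `A ∩ B`, linked to themselves) contribute a factor `1`;
the elements of `A \ B` are processed in increasing order, the initially available
elements of the second row being those of `B \ A`. -/
def mlqW (q : ℝ) (k : ℕ) (A B : Finset ℕ) (F : ℕ → ℕ) : ℝ :=
  chainW q k F ((A \ B).sort (· ≤ ·)) (B \ A)

/-- Extend an injection `f : A ↪ B` to a function `ℕ → ℕ` (identity off `A`). -/
def extendF (A B : Finset ℕ) (f : ↥A ↪ ↥B) : ℕ → ℕ :=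
  fun x => if h : x ∈ A then (f ⟨x, h⟩).1 else x

/-- Sum of the weights `wt(A, B, f)` over all two-row multiline queues `(A, B)` on
`Z_k = {1,…,k}` and all linkings `f` of `(A, B)` (injections `f : A → B` with
`f a = a` for all `a ∈ A ∩ B`) satisfying the condition `cond A B f`. -/
def mlqSum (q : ℝ) (k : ℕ)
    (cond : Finset ℕ → Finset ℕ → (ℕ → ℕ) → Prop) : ℝ :=
  ∑ A ∈ (Finset.Icc 1 k).powerset, ∑ B ∈ (Finset.Icc 1 k).powerset,
    ∑ f : (↥A ↪ ↥B),
      if (∀ a ∈ A ∩ B, extendF A B f a = a) ∧ cond A B (extendF A B f)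
      then mlqW q k A B (extendF A B f) else 0

/-- `η_{s,t}(k)`: the total weight of linked two-row multiline queues of type
`(s, t, k-s-t)` on `Z_k` with disjoint rows whose projected word begins with `2`
(i.e. `1 ∈ B \ f(A)`). -/
def eta (q : ℝ) (s t k : ℕ) : ℝ :=
  mlqSum q k fun A B F =>
    A ∩ B = ∅ ∧ A.card = s ∧ B.card = s + t ∧ 1 ∈ B ∧ 1 ∉ A.image F

/-- `W^A_{s,t}(n)`: total weight of linked MLQs of type `(s,t,n-s-t)` with
`1 ∉ A`, `2 ∉ A`, `1 ∉ B`, `2 ∈ B`, `2 ∉ f(A)` (projected word begins with `3,2`). -/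
def WA (q : ℝ) (s t n : ℕ) : ℝ :=
  mlqSum q n fun A B F =>
    A.card = s ∧ B.card = s + t ∧ 1 ∉ A ∧ 2 ∉ A ∧ 1 ∉ B ∧ 2 ∈ B ∧ 2 ∉ A.image F

/-- `τ^A_{s,t}(n)`: as `W^A_{s,t}(n)`, restricted to `A ∩ B = ∅`. -/
def tauA (q : ℝ) (s t n : ℕ) : ℝ :=
  mlqSum q n fun A B F =>
    A ∩ B = ∅ ∧
    A.card = s ∧ B.card = s + t ∧ 1 ∉ A ∧ 2 ∉ A ∧ 1 ∉ B ∧ 2 ∈ B ∧ 2 ∉ A.image F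

/-- `W^B_{s,t}(n)`: total weight of linked MLQs of type `(s,t,n-s-t)` with
`1 ∈ A`, `2 ∉ A`, `1 ∉ B`, `2 ∈ B`, `2 ∉ f(A)` (projected word begins with `3,2`). -/
def WB (q : ℝ) (s t n : ℕ) : ℝ :=
  mlqSum q n fun A B F =>
    A.card = s ∧ B.card = s + t ∧ 1 ∈ A ∧ 2 ∉ A ∧ 1 ∉ B ∧ 2 ∈ B ∧ 2 ∉ A.image F

/-- `τ^B_{s,t}(n)`: as `W^B_{s,t}(n)`, restricted to `A ∩ B = ∅`. -/
def tauB (q : ℝ) (s t n : ℕ) : ℝ :=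
  mlqSum q n fun A B F =>
    A ∩ B = ∅ ∧
    A.card = s ∧ B.card = s + t ∧ 1 ∈ A ∧ 2 ∉ A ∧ 1 ∉ B ∧ 2 ∈ B ∧ 2 ∉ A.image F

/-- `W^C_{s,t}(n)`: total weight of linked MLQs of type `(s,t,n-s-t)` with
`1 ∉ A`, `2 ∉ A`, `1 ∈ B`, `2 ∉ B`, `1 ∉ f(A)` (projected word begins with `2,3`). -/
def WC (q : ℝ) (s t n : ℕ) : ℝ :=
  mlqSum q n fun A B F =>
    A.card = s ∧ B.card = s + t ∧ 1 ∉ A ∧ 2 ∉ A ∧ 1 ∈ B ∧ 2 ∉ B ∧ 1 ∉ A.image F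

/-- `W^D_{s,t}(n)`: total weight of linked MLQs of type `(s,t,n-s-t)` with
`1 ∉ A`, `2 ∈ A`, `1 ∈ B`, `2 ∉ B`, `1 ∉ f(A)` (projected word begins with `2,3`). -/
def WD (q : ℝ) (s t n : ℕ) : ℝ :=
  mlqSum q n fun A B F =>
    A.card = s ∧ B.card = s + t ∧ 1 ∉ A ∧ 2 ∈ A ∧ 1 ∈ B ∧ 2 ∉ B ∧ 1 ∉ A.image F

/-- `τ^D_{s,t}(n)`: as `W^D_{s,t}(n)`, restricted to `A ∩ B = ∅`. -/
def tauD (q : ℝ) (s t n : ℕ) : ℝ :=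
  mlqSum q n fun A B F =>
    A ∩ B = ∅ ∧
    A.card = s ∧ B.card = s + t ∧ 1 ∉ A ∧ 2 ∈ A ∧ 1 ∈ B ∧ 2 ∉ B ∧ 1 ∉ A.image F

end

section Aux

open Finset

lemma myMod (k x : ℕ) (hk : 0 < k) (hx : x < 2 * k) :
    x % k = if x < k then x else x - k := by
  split_ifs with h
  · exact Nat.mod_eq_of_lt h
  · rw [Nat.mod_eq_sub_mod (le_of_not_gt h), Nat.mod_eq_of_lt (by omega)]

lemma cyc_iff (k a b c : ℕ) (hk : 1 < k) (ha : 1 ≤ a ∧ a ≤ k - 1)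
    (hb : 1 ≤ b ∧ b ≤ k - 1) (hc : 1 ≤ c ∧ c ≤ k - 1) :
    ((c + 1) + k - (a + 1)) % k < ((b + 1) + k - (a + 1)) % k ↔
      (c + (k - 1) - a) % (k - 1) < (b + (k - 1) - a) % (k - 1) := by
  have e1 : (c + 1) + k - (a + 1) = c + k - a := by omega
  have e2 : (b + 1) + k - (a + 1) = b + k - a := by omega
  rw [e1, e2, myMod k (c + k - a) (by omega) (by omega),
    myMod k (b + k - a) (by omega) (by omega),
    myMod (k - 1) (c + (k - 1) - a) (by omega) (by omega),
    myMod (k - 1) (b + (k - 1) - a) (by omega) (by omega)]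
  split_ifs <;> omega

lemma succ_inj' : Function.Injective (· + 1 : ℕ → ℕ) := add_left_injective 1

lemma stepW_shift (q : ℝ) (k : ℕ) (hk : 1 < k) (a b : ℕ) (D : Finset ℕ)
    (ha : 1 ≤ a ∧ a ≤ k - 1) (hb : 1 ≤ b ∧ b ≤ k - 1)
    (hD : ∀ c ∈ D, 1 ≤ c ∧ c ≤ k - 1) :
    stepW q k (a + 1) (D.image (· + 1)) (b + 1) = stepW q (k - 1) a D b := by
  unfold stepW
  have hfe : (D.filter fun c => (c + 1 + k - (a + 1)) % k < (b + 1 + k - (a + 1)) % k)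
      = D.filter fun c => (c + (k - 1) - a) % (k - 1) < (b + (k - 1) - a) % (k - 1) :=
    Finset.filter_congr fun c hc => cyc_iff k a b c hk ha hb (hD c hc)
  rw [Finset.card_image_of_injective _ succ_inj', Finset.filter_image,
    Finset.card_image_of_injective _ succ_inj', hfe]

lemma chainW_shift (q : ℝ) (k : ℕ) (hk : 1 < k) (F F' : ℕ → ℕ) :
    ∀ (l : List ℕ) (D : Finset ℕ),
      (∀ a ∈ l, 1 ≤ a ∧ a ≤ k - 1) →
      (∀ c ∈ D, 1 ≤ c ∧ c ≤ k - 1) →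
      (∀ a ∈ l, F' a ∈ D) →
      (∀ a ∈ l, ∀ b ∈ l, F' a = F' b → a = b) →
      l.Nodup →
      (∀ a ∈ l, F (a + 1) = F' a + 1) →
      chainW q k F (l.map (· + 1)) (D.image (· + 1)) = chainW q (k - 1) F' l D
  | [], D, _, _, _, _, _, _ => rfl
  | a :: l, D, hl, hD, hFD, hFinj, hnd, hFF' => by
    have ha := hl a (by simp)
    have haD : F' a ∈ D := hFD a (by simp)
    have hFa : F (a + 1) = F' a + 1 := hFF' a (by simp)
    have herase : (D.image (· + 1)).erase (F' a + 1) = (D.erase (F' a)).image (· + 1) :=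
      (Finset.image_erase succ_inj' D (F' a)).symm
    simp only [List.map_cons, chainW, hFa, herase]
    rw [stepW_shift q k hk a (F' a) D ha (hD _ haD) hD,
      chainW_shift q k hk F F' l (D.erase (F' a))
        (fun x hx => hl x (by simp [hx]))
        (fun c hc => hD c (Finset.mem_of_mem_erase hc))
        (fun x hx => Finset.mem_erase.2 ⟨fun hcontra => by
          have hax : a = x := hFinj a (by simp) x (by simp [hx]) hcontra.symm
          exact (List.nodup_cons.1 hnd).1 (hax.symm ▸ hx),
          hFD x (by simp [hx])⟩)
        (fun x hx y hy h => hFinj x (by simp [hx]) y (by simp [hy]) h)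
        (List.nodup_cons.1 hnd).2
        (fun x hx => hFF' x (by simp [hx]))]

lemma sort_image_succ (S : Finset ℕ) :
    ((S.image (· + 1)).sort (· ≤ ·)) = (S.sort (· ≤ ·)).map (· + 1) := by
  refine List.Perm.eq_of_pairwise' (Finset.pairwise_sort _ _) ?_ ?_
  · exact List.Pairwise.map _ (fun a b (h : a ≤ b) => by omega : ∀ a b : ℕ, a ≤ b → a + 1 ≤ b + 1)
      (Finset.pairwise_sort _ _)
  · rw [← Multiset.coe_eq_coe, Finset.sort_eq, Finset.image_val,
      Multiset.dedup_eq_self.2 (Multiset.Nodup.map succ_inj' S.nodup),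
      ← Multiset.map_coe, Finset.sort_eq]

lemma mlqW_shift (q : ℝ) (k : ℕ) (hk : 1 < k) (A B : Finset ℕ)
    (hA : A ⊆ Finset.Icc 1 (k - 1)) (hB : B ⊆ Finset.Icc 1 (k - 1))
    (F F' : ℕ → ℕ)
    (hFF' : ∀ a ∈ A, F (a + 1) = F' a + 1)
    (hFB : ∀ a ∈ A \ B, F' a ∈ B \ A)
    (hFinj : ∀ a ∈ A \ B, ∀ b ∈ A \ B, F' a = F' b → a = b) :
    mlqW q k (A.image (· + 1)) (B.image (· + 1)) F = mlqW q (k - 1) A B F' := by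
  unfold mlqW
  rw [← Finset.image_sdiff A B succ_inj', ← Finset.image_sdiff B A succ_inj',
    sort_image_succ]
  apply chainW_shift q k hk F F' _ _
    (fun a halist => by
      have h1 : a ∈ A \ B := (Finset.mem_sort _).1 halist
      have h2 := hA (Finset.mem_sdiff.1 h1).1
      simp only [Finset.mem_Icc] at h2; exact h2)
    (fun c hc => by
      have h2 := hB (Finset.mem_sdiff.1 hc).1
      simp only [Finset.mem_Icc] at h2; exact h2)
    (fun a halist => hFB a ((Finset.mem_sort _).1 halist))
    (fun a halist b hblist h => hFinj a ((Finset.mem_sort _).1 halist)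
      b ((Finset.mem_sort _).1 hblist) h)
    (Finset.sort_nodup _ _)
    (fun a halist => hFF' a (Finset.mem_sdiff.1 ((Finset.mem_sort _).1 halist)).1)

/-- Shift equivalence between a finset of naturals and its successor image. -/
def shiftEquiv' (S : Finset ℕ) : ↥S ≃ ↥(S.image (· + 1)) where
  toFun x := ⟨x.1 + 1, Finset.mem_image_of_mem _ x.2⟩
  invFun y := ⟨y.1 - 1, by
    obtain ⟨x, hx, h⟩ := Finset.mem_image.1 y.2
    have : (y : ℕ) = x + 1 := h.symm
    rw [this]; simpa using hx⟩
  left_inv x := by ext; simp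
  right_inv y := by
    obtain ⟨x, hx, h⟩ := Finset.mem_image.1 y.2
    apply Subtype.ext
    show (y : ℕ) - 1 + 1 = (y : ℕ)
    omega

end Aux
section Main

open Finset

/-- The embedding-type equivalence induced by shifting. -/
def shiftEmb (A B : Finset ℕ) :
    (↥A ↪ ↥B) ≃ (↥(A.image (· + 1)) ↪ ↥(B.image (· + 1))) :=
  Equiv.embeddingCongr (shiftEquiv' A) (shiftEquiv' B)

lemma extendF_shift (A B : Finset ℕ) (f : ↥A ↪ ↥B) {a : ℕ} (ha : a ∈ A) :
    extendF (A.image (· + 1)) (B.image (· + 1)) (shiftEmb A B f) (a + 1)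
      = extendF A B f a + 1 := by
  have hmem : a + 1 ∈ A.image (· + 1) := Finset.mem_image_of_mem _ ha
  unfold extendF
  rw [dif_pos hmem, dif_pos ha]
  show ((shiftEquiv' B) (f ((shiftEquiv' A).symm ⟨a + 1, hmem⟩))).1 = (f ⟨a, ha⟩).1 + 1
  have h2 : (shiftEquiv' A).symm ⟨a + 1, hmem⟩ = ⟨a, ha⟩ :=
    Subtype.ext (by show a + 1 - 1 = a; omega)
  rw [h2]
  rfl

lemma extendF_mem {A B : Finset ℕ} (f : ↥A ↪ ↥B) {a : ℕ} (ha : a ∈ A) :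
    extendF A B f a ∈ B := by
  unfold extendF; rw [dif_pos ha]; exact (f ⟨a, ha⟩).2

lemma extendF_inj {A B : Finset ℕ} (f : ↥A ↪ ↥B) {a b : ℕ} (ha : a ∈ A) (hb : b ∈ A)
    (h : extendF A B f a = extendF A B f b) : a = b := by
  unfold extendF at h
  rw [dif_pos ha, dif_pos hb] at h
  have := f.injective (Subtype.ext h)
  exact congrArg Subtype.val this

lemma one_not_mem_image_succ (A : Finset ℕ) (h0 : ∀ x ∈ A, 1 ≤ x) :
    1 ∉ A.image (· + 1) := by
  intro hmem
  obtain ⟨x, hx, h⟩ := Finset.mem_image.1 hmem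
  have h' : x + 1 = 1 := h
  have := h0 x hx
  omega

lemma two_mem_image_succ (A : Finset ℕ) : 2 ∈ A.image (· + 1) ↔ 1 ∈ A := by
  simp only [Finset.mem_image]
  constructor
  · rintro ⟨x, hx, h⟩
    have h' : x + 1 = 2 := h
    have : x = 1 := by omega
    rwa [this] at hx
  · intro h; exact ⟨1, h, rfl⟩

lemma inner_shift (q : ℝ) (s t k : ℕ) (hk : 1 < k)
    (A B : Finset ℕ) (hA : A ⊆ Finset.Icc 1 (k - 1)) (hB : B ⊆ Finset.Icc 1 (k - 1)) :
    (∑ f : (↥(A.image (· + 1)) ↪ ↥(B.image (· + 1))),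
      if (∀ a ∈ (A.image (· + 1)) ∩ (B.image (· + 1)),
            extendF (A.image (· + 1)) (B.image (· + 1)) f a = a) ∧
          ((A.image (· + 1)) ∩ (B.image (· + 1)) = ∅ ∧
            (A.image (· + 1)).card = s ∧ (B.image (· + 1)).card = s + t ∧
            1 ∉ A.image (· + 1) ∧ 2 ∉ A.image (· + 1) ∧ 1 ∉ B.image (· + 1) ∧
            2 ∈ B.image (· + 1) ∧
            2 ∉ (A.image (· + 1)).image
              (extendF (A.image (· + 1)) (B.image (· + 1)) f))
      then mlqW q k (A.image (· + 1)) (B.image (· + 1))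
        (extendF (A.image (· + 1)) (B.image (· + 1)) f) else 0)
    = ∑ f : (↥A ↪ ↥B),
      if (∀ a ∈ A ∩ B, extendF A B f a = a) ∧
          (A ∩ B = ∅ ∧ A.card = s ∧ B.card = s + t ∧ 1 ∈ B ∧
            1 ∉ A.image (extendF A B f))
      then mlqW q (k - 1) A B (extendF A B f) else 0 := by
  refine (Fintype.sum_equiv (shiftEmb A B) _ _ ?_).symm
  intro f
  set F' := extendF A B f with hF'
  set F := extendF (A.image (· + 1)) (B.image (· + 1)) (shiftEmb A B f) with hF
  have fact1 : ∀ a ∈ A, F (a + 1) = F' a + 1 := fun a ha => extendF_shift A B f ha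
  have hintim : (A.image (· + 1)) ∩ (B.image (· + 1)) = (A ∩ B).image (· + 1) :=
    (Finset.image_inter A B succ_inj').symm
  have h2imF : 2 ∈ (A.image (· + 1)).image F ↔ 1 ∈ A.image F' := by
    constructor
    · intro h
      obtain ⟨y, hy, hy2⟩ := Finset.mem_image.1 h
      obtain ⟨a, ha, rfl⟩ := Finset.mem_image.1 hy
      refine Finset.mem_image.2 ⟨a, ha, ?_⟩
      have := fact1 a ha
      omega
    · intro h
      obtain ⟨a, ha, ha1⟩ := Finset.mem_image.1 h
      refine Finset.mem_image.2 ⟨a + 1, Finset.mem_image_of_mem _ ha, ?_⟩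
      rw [fact1 a ha, ha1]
  have hiff : ((∀ a ∈ A ∩ B, F' a = a) ∧
      (A ∩ B = ∅ ∧ A.card = s ∧ B.card = s + t ∧ 1 ∈ B ∧ 1 ∉ A.image F')) ↔
      ((∀ a ∈ (A.image (· + 1)) ∩ (B.image (· + 1)), F a = a) ∧
      ((A.image (· + 1)) ∩ (B.image (· + 1)) = ∅ ∧
        (A.image (· + 1)).card = s ∧ (B.image (· + 1)).card = s + t ∧
        1 ∉ A.image (· + 1) ∧ 2 ∉ A.image (· + 1) ∧ 1 ∉ B.image (· + 1) ∧
        2 ∈ B.image (· + 1) ∧ 2 ∉ (A.image (· + 1)).image F)) := by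
    constructor
    · rintro ⟨-, hd, hcA, hcB, h1B, h1F⟩
      have hdis : (A.image (· + 1)) ∩ (B.image (· + 1)) = ∅ := by
        rw [hintim, hd]; simp
      refine ⟨fun a ha => absurd ha (by rw [hdis]; simp), hdis,
        by rw [Finset.card_image_of_injective _ succ_inj', hcA],
        by rw [Finset.card_image_of_injective _ succ_inj', hcB],
        one_not_mem_image_succ A (fun x hx => (Finset.mem_Icc.1 (hA hx)).1),
        fun h2A => ?_, one_not_mem_image_succ B (fun x hx => (Finset.mem_Icc.1 (hB hx)).1),
        (two_mem_image_succ B).2 h1B,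
        fun h => h1F (h2imF.1 h)⟩
      · have h1A : 1 ∈ A := (two_mem_image_succ A).1 h2A
        have : 1 ∈ A ∩ B := Finset.mem_inter.2 ⟨h1A, h1B⟩
        rw [hd] at this; simp at this
    · rintro ⟨-, hdis, hcA, hcB, -, h2A, -, h2B, h2F⟩
      have hd : A ∩ B = ∅ := by
        rw [hintim] at hdis
        exact Finset.image_eq_empty.1 hdis
      refine ⟨fun a ha => absurd ha (by rw [hd]; simp), hd,
        by rw [Finset.card_image_of_injective _ succ_inj'] at hcA; exact hcA,
        by rw [Finset.card_image_of_injective _ succ_inj'] at hcB; exact hcB,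
        (two_mem_image_succ B).1 h2B,
        fun h => h2F (h2imF.2 h)⟩
  by_cases hP : (∀ a ∈ A ∩ B, F' a = a) ∧
      (A ∩ B = ∅ ∧ A.card = s ∧ B.card = s + t ∧ 1 ∈ B ∧ 1 ∉ A.image F')
  · rw [if_pos hP, if_pos (hiff.1 hP)]
    obtain ⟨-, hd, -, -, -, -⟩ := hP
    refine (mlqW_shift q k hk A B hA hB F F' fact1 ?_ ?_).symm
    · intro a haAB
      have haA := (Finset.mem_sdiff.1 haAB).1
      refine Finset.mem_sdiff.2 ⟨extendF_mem f haA, fun hFA => ?_⟩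
      have : F' a ∈ A ∩ B := Finset.mem_inter.2 ⟨hFA, extendF_mem f haA⟩
      rw [hd] at this; simp at this
    · intro a haAB b hbAB h
      exact extendF_inj f (Finset.mem_sdiff.1 haAB).1 (Finset.mem_sdiff.1 hbAB).1 h
  · rw [if_neg hP, if_neg (fun h => hP (hiff.2 h))]

end Main


/-- `τ^A_{s,t}(k) = η_{s,t}(k-1)`: deleting the empty first column of a type-(A)
multiline queue with disjoint rows is a weight-preserving bijection with the
linked multiline queues counted by `η_{s,t}(k-1)`. -/
theorem tauA_eq_eta (q : ℝ) (hq0 : 0 ≤ q) (hq1 : q < 1)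
    (s t k : ℕ) (hk : 1 < k) (hst : s + t ≤ k - 1) :
    tauA q s t k = eta q s t (k - 1) := by
  have hps : (Finset.Icc 2 k).powerset ⊆ (Finset.Icc 1 k).powerset :=
    Finset.powerset_mono.2 (Finset.Icc_subset_Icc_left (by omega))
  have hone : ∀ S ∈ (Finset.Icc 1 k).powerset, S ∉ (Finset.Icc 2 k).powerset → 1 ∈ S := by
    intro S hS hS2
    rw [Finset.mem_powerset] at hS hS2
    obtain ⟨x, hxS, hx2⟩ := Finset.not_subset.1 hS2
    have h1 := Finset.mem_Icc.1 (hS hxS)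
    have hx2' : ¬(2 ≤ x ∧ x ≤ k) := fun h => hx2 (Finset.mem_Icc.2 h)
    have hx1 : x = 1 := by omega
    rwa [hx1] at hxS
  have hmemi : ∀ S ∈ (Finset.Icc 1 (k - 1)).powerset,
      S.image (· + 1) ∈ (Finset.Icc 2 k).powerset := by
    intro S hS
    rw [Finset.mem_powerset] at hS ⊢
    intro y hy
    obtain ⟨x, hx, rfl⟩ := Finset.mem_image.1 hy
    have := Finset.mem_Icc.1 (hS hx)
    exact Finset.mem_Icc.2 (by omega)
  have hmemj : ∀ S ∈ (Finset.Icc 2 k).powerset,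
      S.image (· - 1) ∈ (Finset.Icc 1 (k - 1)).powerset := by
    intro S hS
    rw [Finset.mem_powerset] at hS ⊢
    intro y hy
    obtain ⟨x, hx, rfl⟩ := Finset.mem_image.1 hy
    have := Finset.mem_Icc.1 (hS hx)
    exact Finset.mem_Icc.2 (by omega)
  have hleft : ∀ S : Finset ℕ, (S.image (· + 1)).image (· - 1) = S := by
    intro S
    ext x
    simp only [Finset.mem_image]
    constructor
    · rintro ⟨y, ⟨z, hz, rfl⟩, rfl⟩
      show z + 1 - 1 ∈ S
      simpa using hz
    · intro hx
      exact ⟨x + 1, ⟨x, hx, rfl⟩, rfl⟩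
  have hright : ∀ S ∈ (Finset.Icc 2 k).powerset, (S.image (· - 1)).image (· + 1) = S := by
    intro S hS
    have hS' := Finset.mem_powerset.1 hS
    ext x
    simp only [Finset.mem_image]
    constructor
    · rintro ⟨y, ⟨z, hz, rfl⟩, rfl⟩
      show z - 1 + 1 ∈ S
      have h2 : 2 ≤ z := (Finset.mem_Icc.1 (hS' hz)).1
      have he : z - 1 + 1 = z := by omega
      rwa [he]
    · intro hx
      have h2 : 2 ≤ x := (Finset.mem_Icc.1 (hS' hx)).1
      exact ⟨x - 1, ⟨x, hx, rfl⟩, by show x - 1 + 1 = x; omega⟩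
  simp only [tauA, eta, mlqSum]
  refine Eq.trans (Finset.sum_subset hps ?_).symm ?_
  · intro A hA hA2
    exact Finset.sum_eq_zero fun B _ => Finset.sum_eq_zero fun f _ =>
      if_neg fun hc => hc.2.2.2.2.1 (hone A hA hA2)
  refine Eq.trans (Finset.sum_congr rfl fun A _ =>
    (Finset.sum_subset hps fun B hB hB2 => Finset.sum_eq_zero fun f _ =>
      if_neg fun hc => hc.2.2.2.2.2.2.1 (hone B hB hB2)).symm) ?_
  refine Eq.symm (Finset.sum_nbij' (i := fun S => S.image (· + 1))
    (j := fun S => S.image (· - 1)) hmemi hmemj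
    (fun S _ => hleft S) (fun S hS => hright S hS) ?_)
  intro A' hA'
  refine Finset.sum_nbij' (i := fun S => S.image (· + 1))
    (j := fun S => S.image (· - 1)) hmemi hmemj
    (fun S _ => hleft S) (fun S hS => hright S hS) ?_
  intro B' hB'
  have h := (inner_shift q s t k hk A' B' (Finset.mem_powerset.1 hA')
    (Finset.mem_powerset.1 hB')).symm
  refine Eq.trans ?_ (h.trans ?_) <;>
    exact Finset.sum_congr rfl fun f _ => by congr 1
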